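/- For positive integers a2, a3, the number of integer triples (x1, x2, x3) in the cube [-N, N]^3 satisfying x1 = a2·x2^2 - a3·x3^2 is O(N^{3/2}), i.e. there exists a constant C (depending on a2, a3) such that the count is at most C·N^{3/2} for all N ≥ 1. -/

import Mathlib

open Finset

/-- Number of integers x in [-N,N] with c - a·x² in [-N,N] is at most 2√(2N)+2. -/
lemma fiber_bound (a : ℤ) (ha : 1 ≤ a) (c : ℤ) (N : ℕ) :
    (((Finset.Icc (-(N:ℤ)) N).filter
        (fun x => c - a * x ^ 2 ∈ Finset.Icc (-(N:ℤ)) N)).card : ℝ) ≤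
      2 * Real.sqrt (2 * N) + 2 := by
  set S := (Finset.Icc (-(N:ℤ)) N).filter
      (fun x => c - a * x ^ 2 ∈ Finset.Icc (-(N:ℤ)) N) with hS
  set T := S.filter (fun x => 0 ≤ x) with hT
  have hmemT : ∀ x ∈ T, 0 ≤ x ∧ -(N:ℤ) ≤ c - a * x ^ 2 ∧ c - a * x ^ 2 ≤ (N:ℤ) := by
    intro x hx
    simp only [hT, hS, Finset.mem_filter, Finset.mem_Icc] at hx
    exact ⟨hx.2, hx.1.2⟩
  have hsqrt0 : 0 ≤ Real.sqrt (2 * N) := Real.sqrt_nonneg _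
  have hTb : (T.card : ℝ) ≤ Real.sqrt (2 * N) + 1 := by
    rcases T.eq_empty_or_nonempty with h | h
    · simp only [h, Finset.card_empty, Nat.cast_zero]
      positivity
    · have hAmem := T.min'_mem h
      have hBmem := T.max'_mem h
      set A := T.min' h with hA
      set B := T.max' h with hB
      have hAB : A ≤ B := T.min'_le _ hBmem
      obtain ⟨hA0, _, hAup⟩ := hmemT A hAmem
      obtain ⟨_, hBlo, _⟩ := hmemT B hBmem
      have hsqle : A ^ 2 ≤ B ^ 2 := by nlinarith
      have key : (B - A) ^ 2 ≤ 2 * (N:ℤ) := by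
        nlinarith [mul_nonneg (sub_nonneg.2 ha) (sub_nonneg.2 hsqle)]
      have hsub : T ⊆ Finset.Icc A B := fun x hx =>
        Finset.mem_Icc.2 ⟨T.min'_le x hx, T.le_max' x hx⟩
      have hcard : T.card ≤ (B + 1 - A).toNat := by
        simpa [Int.card_Icc] using Finset.card_le_card hsub
      have hBA : ((B - A : ℤ) : ℝ) ≤ Real.sqrt (2 * N) := by
        have h1 : Real.sqrt (((B - A : ℤ) : ℝ) ^ 2) ≤ Real.sqrt (2 * N) := by
          apply Real.sqrt_le_sqrt
          have : (((B - A) ^ 2 : ℤ) : ℝ) ≤ ((2 * (N:ℤ) : ℤ) : ℝ) := by exact_mod_cast key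
          push_cast at this ⊢
          linarith
        rwa [Real.sqrt_sq (by exact_mod_cast sub_nonneg.2 hAB)] at h1
      have h0 : ((B + 1 - A).toNat : ℤ) = B + 1 - A := Int.toNat_of_nonneg (by omega)
      calc (T.card : ℝ) ≤ (((B + 1 - A).toNat : ℕ) : ℝ) := by exact_mod_cast hcard
        _ = ((B + 1 - A : ℤ) : ℝ) := by exact_mod_cast h0
        _ ≤ Real.sqrt (2 * N) + 1 := by push_cast at hBA ⊢; linarith
  have hST : S.card ≤ 2 * T.card := by
    have h2 : (S.filter (fun x => ¬ 0 ≤ x)).card ≤ T.card := by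
      apply Finset.card_le_card_of_injOn (fun x => -x)
      · intro x hx
        simp only [hT, hS, Finset.mem_coe, Finset.mem_filter, Finset.mem_Icc, neg_sq] at hx ⊢
        obtain ⟨⟨⟨h1, h2⟩, h3⟩, h4⟩ := hx
        exact ⟨⟨⟨by omega, by omega⟩, h3⟩, by omega⟩
      · exact fun x _ y _ hxy => neg_injective hxy
    have h3 := Finset.card_union_le T (S.filter (fun x => ¬ 0 ≤ x))
    have h4 : T ∪ S.filter (fun x => ¬ 0 ≤ x) = S := by
      rw [hT]; exact Finset.filter_union_filter_not_eq _ S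
    rw [h4] at h3
    omega
  have h4 : (S.card : ℝ) ≤ 2 * (T.card : ℝ) := by exact_mod_cast hST
  linarith

/-- For fixed positive integers a2, a3, the number of integer points on the
hyperbolic paraboloid x1 = a2·x2² - a3·x3² in the cube [-N,N]³ is O(N^(3/2)). -/
theorem stmt_3 (a2 a3 : ℕ) (ha2 : 0 < a2) (ha3 : 0 < a3) :
    ∃ C : ℝ, 0 < C ∧ ∀ N : ℕ, 1 ≤ N →
      (((Finset.Icc (-(N:ℤ)) N ×ˢ Finset.Icc (-(N:ℤ)) N ×ˢ Finset.Icc (-(N:ℤ)) N).filter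
          (fun p : ℤ × ℤ × ℤ =>
            p.1 = (a2 : ℤ) * p.2.1 ^ 2 - (a3 : ℤ) * p.2.2 ^ 2)).card : ℝ) ≤
        C * (N : ℝ) ^ ((3 : ℝ) / 2) := by
  refine ⟨15, by norm_num, fun N hN => ?_⟩
  set I := Finset.Icc (-(N:ℤ)) N with hI
  set G := (I ×ˢ I).filter
      (fun q : ℤ × ℤ => (a2:ℤ) * q.1 ^ 2 - (a3:ℤ) * q.2 ^ 2 ∈ I) with hG
  have stepA : ((I ×ˢ I ×ˢ I).filter
      (fun p : ℤ × ℤ × ℤ =>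
        p.1 = (a2 : ℤ) * p.2.1 ^ 2 - (a3 : ℤ) * p.2.2 ^ 2)).card ≤ G.card := by
    apply Finset.card_le_card_of_injOn (fun p => p.2)
    · intro p hp
      simp only [hG, Finset.mem_coe, Finset.mem_filter, Finset.mem_product] at hp ⊢
      exact ⟨⟨hp.1.2.1, hp.1.2.2⟩, hp.2 ▸ hp.1.1⟩
    · intro p hp q hq hpq
      have hp' := (Finset.mem_filter.1 hp).2
      have hq' := (Finset.mem_filter.1 hq).2
      have h2 : p.2 = q.2 := hpq
      exact Prod.ext (by rw [hp', hq', h2]) h2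
  have stepB : (G.card : ℝ) ≤ (I.card : ℝ) * (2 * Real.sqrt (2 * N) + 2) := by
    have hfib : G.card = ∑ x ∈ I, (G.filter (fun p => p.1 = x)).card :=
      Finset.card_eq_sum_card_fiberwise (fun p hp => by
        simp only [hG, Finset.mem_coe, Finset.mem_filter, Finset.mem_product] at hp; exact hp.1.1)
    rw [hfib]
    push_cast
    rw [Finset.card_eq_sum_ones I]
    push_cast
    rw [Finset.sum_mul]
    apply Finset.sum_le_sum
    intro x _
    have hle : (G.filter (fun p => p.1 = x)).card ≤
        (I.filter (fun y => (a2:ℤ) * x ^ 2 - (a3:ℤ) * y ^ 2 ∈ I)).card := by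
      apply Finset.card_le_card_of_injOn (fun p => p.2)
      · intro p hp
        simp only [hG, Finset.mem_coe, Finset.mem_filter, Finset.mem_product] at hp ⊢
        refine ⟨hp.1.1.2, ?_⟩
        rw [← hp.2]; exact hp.1.2
      · intro p hp q hq hpq
        have hp' := (Finset.mem_filter.1 hp).2
        have hq' := (Finset.mem_filter.1 hq).2
        exact Prod.ext (hp'.trans hq'.symm) hpq
    have hthis := fiber_bound (a3 : ℤ) (by exact_mod_cast ha3) ((a2:ℤ) * x ^ 2) N
    calc ((G.filter (fun p => p.1 = x)).card : ℝ)
        ≤ ((I.filter (fun y => (a2:ℤ) * x ^ 2 - (a3:ℤ) * y ^ 2 ∈ I)).card : ℝ) := by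
          exact_mod_cast hle
      _ ≤ 2 * Real.sqrt (2 * N) + 2 := hthis
      _ = 1 * (2 * Real.sqrt (2 * N) + 2) := by ring
  have hIcardN : I.card = 2 * N + 1 := by
    rw [hI, Int.card_Icc]; omega
  have hIcard : (I.card : ℝ) = 2 * N + 1 := by
    rw [hIcardN]; push_cast; ring
  have hN1 : (1:ℝ) ≤ (N:ℝ) := by exact_mod_cast hN
  have hsqN : (1:ℝ) ≤ Real.sqrt N := by
    rw [show (1:ℝ) = Real.sqrt 1 by simp]
    exact Real.sqrt_le_sqrt hN1
  have hsqrt2 : Real.sqrt 2 ≤ 1.5 := by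
    rw [show (1.5:ℝ) = Real.sqrt (1.5 ^ 2) by rw [Real.sqrt_sq]; norm_num]
    apply Real.sqrt_le_sqrt; norm_num
  have hmul : Real.sqrt (2 * N) = Real.sqrt 2 * Real.sqrt N :=
    Real.sqrt_mul (by norm_num) _
  have hrpow : (N : ℝ) ^ ((3:ℝ)/2) = (N:ℝ) * Real.sqrt N := by
    rw [show (3:ℝ)/2 = 1 + 1/2 by norm_num, Real.rpow_add (by linarith), Real.rpow_one,
      ← Real.sqrt_eq_rpow]
  have hsq0 : 0 ≤ Real.sqrt N := Real.sqrt_nonneg _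
  calc (((I ×ˢ I ×ˢ I).filter
      (fun p : ℤ × ℤ × ℤ =>
        p.1 = (a2 : ℤ) * p.2.1 ^ 2 - (a3 : ℤ) * p.2.2 ^ 2)).card : ℝ)
      ≤ (G.card : ℝ) := by exact_mod_cast stepA
    _ ≤ (I.card : ℝ) * (2 * Real.sqrt (2 * N) + 2) := stepB
    _ = (2 * N + 1) * (2 * (Real.sqrt 2 * Real.sqrt N) + 2) := by rw [hIcard, hmul]
    _ ≤ (3 * N) * (5 * Real.sqrt N) := by
        nlinarith [mul_nonneg (mul_nonneg (by linarith : (0:ℝ) ≤ (N:ℝ))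
            (sub_nonneg.2 hsqrt2)) hsq0,
          mul_nonneg (sub_nonneg.2 hsqrt2) hsq0,
          mul_nonneg (sub_nonneg.2 hN1) (sub_nonneg.2 hsqN),
          mul_nonneg hsq0 (sub_nonneg.2 hN1),
          mul_nonneg (by linarith : (0:ℝ) ≤ (N:ℝ)) (sub_nonneg.2 hsqN)]
    _ = 15 * ((N:ℝ) * Real.sqrt N) := by ring
    _ = 15 * (N : ℝ) ^ ((3:ℝ)/2) := by rw [hrpow]
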